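/- Let 𝒴 = ℝ^m, 𝒰 = ℝ^d, ν a probability measure on 𝒴 × 𝒰 with 𝒴-marginal ν_𝒴, η_𝒰 a probability measure on 𝒰, and η = ν_𝒴 ⊗ η_𝒰. Let T(y,u) = (y, T_𝒰(y,u)) be a measurable block-triangular map with T_𝒰 : 𝒴 × 𝒰 → 𝒰. If T#η = ν, then for ν_𝒴-almost every y ∈ 𝒴, T_𝒰(y,·)#η_𝒰 equals the conditional distribution ν(·|y) of the second component given the first. -/
import Mathlib


open MeasureTheory

/-- Let `𝒴 = ℝ^m`, `𝒰 = ℝ^d`, `ν` a probability measure on `𝒴 × 𝒰`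
with `𝒴`-marginal `ν_𝒴 = ν.fst`, `η_𝒰` a probability measure on `𝒰`, and
`η = ν_𝒴 ⊗ η_𝒰`. If the block-triangular map `T(y,u) = (y, T_𝒰(y,u))` pushes `η`
forward to `ν`, then for `ν_𝒴`-a.e. `y`, `T_𝒰(y,·)#η_𝒰` equals the conditional
distribution `ν(·|y)` (the disintegration kernel `ν.condKernel`). -/
theorem stmt12_triangular_map_conditional
    {m d : ℕ}
    (ν : Measure (EuclideanSpace ℝ (Fin m) × EuclideanSpace ℝ (Fin d)))
    [IsProbabilityMeasure ν]
    (ηU : Measure (EuclideanSpace ℝ (Fin d))) [IsProbabilityMeasure ηU]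
    (TU : EuclideanSpace ℝ (Fin m) → EuclideanSpace ℝ (Fin d) →
      EuclideanSpace ℝ (Fin d))
    (hTU : Measurable (fun p : EuclideanSpace ℝ (Fin m) × EuclideanSpace ℝ (Fin d) =>
      TU p.1 p.2))
    (hpush : (ν.fst.prod ηU).map
      (fun p : EuclideanSpace ℝ (Fin m) × EuclideanSpace ℝ (Fin d) =>
        (p.1, TU p.1 p.2)) = ν) :
    ∀ᵐ y ∂ν.fst, ηU.map (TU y) = ν.condKernel y := by
  have hmeas : ∀ y, Measurable (TU y) := fun y => hTU.comp measurable_prodMk_left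
  have hκmeas : Measurable (fun y => ηU.map (TU y)) := by
    apply Measure.measurable_of_measurable_coe
    intro s hs
    simp_rw [Measure.map_apply (hmeas _) hs]
    have h : ∀ y, TU y ⁻¹' s = Prod.mk y ⁻¹'
        ((fun p : EuclideanSpace ℝ (Fin m) × EuclideanSpace ℝ (Fin d) =>
          TU p.1 p.2) ⁻¹' s) := fun y => rfl
    simp_rw [h]
    exact measurable_measure_prodMk_left (hTU hs)
  let κ : ProbabilityTheory.Kernel (EuclideanSpace ℝ (Fin m)) (EuclideanSpace ℝ (Fin d)) :=
    ⟨fun y => ηU.map (TU y), hκmeas⟩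
  have hκ : ∀ y, κ y = ηU.map (TU y) := fun _ => rfl
  have : ProbabilityTheory.IsMarkovKernel κ :=
    ⟨fun y => by rw [hκ]; exact Measure.isProbabilityMeasure_map (hmeas y).aemeasurable⟩
  have hcomp : ν = Measure.compProd ν.fst κ := by
    ext s hs
    rw [Measure.compProd_apply hs]
    conv_lhs => rw [← hpush]
    rw [Measure.map_apply (measurable_fst.prodMk hTU) hs,
      Measure.prod_apply ((measurable_fst.prodMk hTU) hs)]
    refine lintegral_congr fun y => ?_
    rw [hκ, Measure.map_apply (hmeas y) (measurable_prodMk_left hs)]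
    rfl
  filter_upwards [ProbabilityTheory.eq_condKernel_of_measure_eq_compProd κ hcomp] with y hy
  rw [← hy, hκ]
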